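/- Let Λ be a self-adjoint linear relation on ℂⁿ (with the standard Hermitian inner product, linear in the second argument). Then there exists a subset θ ⊆ {1,…,n} such that, denoting by P_θ the orthogonal projection onto span{e_j : j ∈ θ} (e_j the standard basis) and P_θᶜ = 1 − P_θ, the transformed linear relation Λ^θ := {(P_θᶜ x₁ + P_θ x₂, P_θᶜ x₂ − P_θ x₁) : (x₁,x₂) ∈ Λ} is the graph of a linear operator on ℂⁿ, i.e. the projection of Λ^θ onto its first component is injective and has full range. -/

import Mathlib

open ContinuousLinearMap

variable {G : Type*} [NormedAddCommGroup G] [InnerProductSpace ℂ G] [CompleteSpace G]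

/-- The operator `M^{A,B}` on `G × G`, `(x₁,x₂) ↦ (A x₁ - B x₂, B x₁ + A x₂)`. -/
noncomputable def MAB (A B : G →L[ℂ] G) : (G × G) →L[ℂ] (G × G) :=
  ((A.comp (fst ℂ G G)) - (B.comp (snd ℂ G G))).prod
    ((B.comp (fst ℂ G G)) + (A.comp (snd ℂ G G)))

/-- The linear relation `Λ^{A,B} = {(x₁,x₂) : A x₁ = B x₂}`. -/
def LambdaAB (A B : G →L[ℂ] G) : Submodule ℂ (G × G) where
  carrier := {p | A p.1 = B p.2}
  add_mem' := by
    intro a b ha hb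
    simp only [Set.mem_setOf_eq] at *
    simp [ha, hb]
  zero_mem' := by simp
  smul_mem' := by
    intro c p hp
    simp only [Set.mem_setOf_eq] at *
    simp [hp]

/-- The adjoint of a linear relation. -/
def relAdjoint (Λ : Submodule ℂ (G × G)) : Submodule ℂ (G × G) where
  carrier := {p | ∀ q ∈ Λ, (inner ℂ p.1 q.2 : ℂ) = inner ℂ p.2 q.1}
  add_mem' := by
    intro a b ha hb q hq
    simp [inner_add_left, ha q hq, hb q hq]
  zero_mem' := by
    intro q hq; simp
  smul_mem' := by
    intro c p hp q hq
    simp [inner_smul_left, hp q hq]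

/-- A linear relation is self-adjoint if it equals its adjoint. -/
def IsSelfAdjointRel (Λ : Submodule ℂ (G × G)) : Prop := relAdjoint Λ = Λ

/-- A bounded operator is boundedly invertible if it has a bounded two-sided inverse. -/
def IsBoundedlyInvertible {E F : Type*} [NormedAddCommGroup E] [NormedSpace ℂ E]
    [NormedAddCommGroup F] [NormedSpace ℂ F] (T : E →L[ℂ] F) : Prop :=
  ∃ T' : F →L[ℂ] E, (∀ x, T' (T x) = x) ∧ (∀ y, T (T' y) = y)

/-- The pair `(A,B)` is normalized if `A B* = B A*` and `M^{A,B}` is boundedly invertible. -/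
noncomputable def IsNormalized (A B : G →L[ℂ] G) : Prop :=
  A ∘L adjoint B = B ∘L adjoint A ∧ IsBoundedlyInvertible (MAB A B)

/-- The transformed linear relation `Λ^θ = {(P_θᶜ x₁ + P_θ x₂, P_θᶜ x₂ − P_θ x₁) : (x₁,x₂) ∈ Λ}`,
written componentwise (`P_θ` is the orthogonal projection onto `span{e_j : j ∈ θ}` and
`P_θᶜ = 1 − P_θ`). -/
def coordTransform {n : ℕ} (θ : Finset (Fin n))
    (Λ : Submodule ℂ (EuclideanSpace ℂ (Fin n) × EuclideanSpace ℂ (Fin n))) :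
    Set (EuclideanSpace ℂ (Fin n) × EuclideanSpace ℂ (Fin n)) :=
  {r | ∃ p ∈ Λ, (∀ j, r.1 j = if j ∈ θ then p.2 j else p.1 j) ∧
                (∀ j, r.2 j = if j ∈ θ then -(p.1 j) else p.2 j)}

namespace ArnoldAuxProof

open Module

/-- Coordinate projection onto coordinates in `θ`. -/
def projL (n : ℕ) (θ : Finset (Fin n)) :
    EuclideanSpace ℂ (Fin n) →ₗ[ℂ] EuclideanSpace ℂ (Fin n) where
  toFun x := WithLp.toLp 2 (fun j => if j ∈ θ then x j else 0)
  map_add' x y := by ext j; by_cases h : j ∈ θ <;> simp [h, PiLp.add_apply]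
  map_smul' c x := by ext j; by_cases h : j ∈ θ <;> simp [h, PiLp.smul_apply]

theorem exists_good {n : ℕ} (N : Submodule ℂ (EuclideanSpace ℂ (Fin n))) :
    ∃ θ : Finset (Fin n),
      (∀ v ∈ N, (∀ j ∈ θ, v j = 0) → v = 0) ∧
      (∀ x : EuclideanSpace ℂ (Fin n), ∃ v ∈ N, ∀ j ∈ θ, v j = x j) := by
  classical
  set Sep : Set (Finset (Fin n)) := {θ | ∀ v ∈ N, (∀ j ∈ θ, v j = 0) → v = 0} with hSep
  have hne : Sep.Nonempty :=
    ⟨Finset.univ, fun v _ h => PiLp.ext fun j => by simpa using h j (Finset.mem_univ j)⟩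
  obtain ⟨θ, hθ, hmin⟩ := Set.exists_min_image Sep (·.card) (Set.toFinite _) hne
  refine ⟨θ, hθ, ?_⟩
  by_contra hsur
  push_neg at hsur
  obtain ⟨x, hx⟩ := hsur
  set W := N.map (projL n θ) with hW
  set Vθ : Submodule ℂ (EuclideanSpace ℂ (Fin n)) := LinearMap.range (projL n θ) with hV
  have hWV : W ≤ Vθ := by rintro w ⟨v, _, rfl⟩; exact ⟨v, rfl⟩
  have hxW : projL n θ x ∉ W := by
    rintro ⟨v, hv, hvx⟩
    obtain ⟨j, hj, hne'⟩ := hx v hv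
    apply hne'
    have := congrArg (fun z : EuclideanSpace ℂ (Fin n) => z j) hvx
    simpa [projL, hj] using this
  have hlt : W < Vθ := lt_of_le_of_ne hWV (fun h => hxW (h ▸ ⟨x, rfl⟩))
  have h4 : finrank ℂ W < finrank ℂ Vθ := Submodule.finrank_lt_finrank_of_lt hlt
  have h1 : finrank ℂ W + finrank ℂ Wᗮ = n := by
    simpa [finrank_euclideanSpace_fin] using Submodule.finrank_add_finrank_orthogonal W
  have h2 := Submodule.finrank_sup_add_finrank_inf_eq Wᗮ Vθ
  have h3 : finrank ℂ ↥(Wᗮ ⊔ Vθ) ≤ n := by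
    simpa [finrank_euclideanSpace_fin] using Submodule.finrank_le (Wᗮ ⊔ Vθ)
  have h5 : finrank ℂ Vθ ≤ n := by
    simpa [finrank_euclideanSpace_fin] using Submodule.finrank_le Vθ
  have hpos : 0 < finrank ℂ ↥(Wᗮ ⊓ Vθ) := by omega
  have hnb : (Wᗮ ⊓ Vθ) ≠ ⊥ := by
    intro h; rw [h] at hpos; simp at hpos
  obtain ⟨c, hc, hc0⟩ := Submodule.exists_mem_ne_zero_of_ne_bot hnb
  obtain ⟨j₀, hj₀⟩ : ∃ j₀, c j₀ ≠ 0 := by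
    by_contra h; push_neg at h; exact hc0 (PiLp.ext fun j => by simp [h j])
  obtain ⟨y, hy⟩ := hc.2
  have hj₀θ : j₀ ∈ θ := by
    by_contra hjn
    apply hj₀
    have := congrArg (fun z : EuclideanSpace ℂ (Fin n) => z j₀) hy
    simpa [projL, hjn] using this.symm
  have hsep' : θ.erase j₀ ∈ Sep := by
    intro v hv hv0
    have hvW : projL n θ v ∈ W := ⟨v, hv, rfl⟩
    have hinner := (Submodule.mem_orthogonal W c).1 hc.1 _ hvW
    rw [PiLp.inner_apply] at hinner
    have hsum : ∀ j ∈ Finset.univ, j ≠ j₀ →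
        (inner ℂ (projL n θ v j) (c j)) = 0 := by
      intro j _ hjne
      by_cases hjθ : j ∈ θ
      · have : v j = 0 := hv0 j (Finset.mem_erase.2 ⟨hjne, hjθ⟩)
        simp [projL, hjθ, this]
      · simp [projL, hjθ]
    rw [Finset.sum_eq_single_of_mem j₀ (Finset.mem_univ j₀) hsum] at hinner
    have hvj₀ : v j₀ = 0 := by
      have : (starRingEnd ℂ) (v j₀) * c j₀ = 0 := by
        simpa [projL, hj₀θ, RCLike.inner_apply', or_comm] using hinner
      rcases mul_eq_zero.1 this with h | h
      · simpa using congrArg (starRingEnd ℂ) h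
      · exact absurd h hj₀
    refine hθ v hv fun j hj => ?_
    rcases eq_or_ne j j₀ with rfl | hne'
    · exact hvj₀
    · exact hv0 j (Finset.mem_erase.2 ⟨hne', hj⟩)
  have := hmin _ hsep'
  have hcard : (θ.erase j₀).card < θ.card := Finset.card_erase_lt_of_mem hj₀θ
  omega

theorem finrank_selfAdjointRel {n : ℕ}
    (Λ : Submodule ℂ (EuclideanSpace ℂ (Fin n) × EuclideanSpace ℂ (Fin n)))
    (hΛ : IsSelfAdjointRel Λ) : finrank ℂ Λ = n := by
  classical
  let J : (EuclideanSpace ℂ (Fin n) × EuclideanSpace ℂ (Fin n)) ≃ₗ[ℂ] (EuclideanSpace ℂ (Fin n) × EuclideanSpace ℂ (Fin n)) :=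
    (LinearEquiv.prodComm ℂ (EuclideanSpace ℂ (Fin n)) (EuclideanSpace ℂ (Fin n))).trans ((LinearEquiv.neg ℂ).prodCongr (LinearEquiv.refl ℂ (EuclideanSpace ℂ (Fin n))))
  have hJ : ∀ p : EuclideanSpace ℂ (Fin n) × EuclideanSpace ℂ (Fin n), J p = (-p.2, p.1) := fun p => rfl
  let eW : WithLp 2 (EuclideanSpace ℂ (Fin n) × EuclideanSpace ℂ (Fin n)) ≃ₗ[ℂ] (EuclideanSpace ℂ (Fin n) × EuclideanSpace ℂ (Fin n)) := WithLp.linearEquiv 2 ℂ (EuclideanSpace ℂ (Fin n) × EuclideanSpace ℂ (Fin n))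
  have heW : ∀ w : WithLp 2 (EuclideanSpace ℂ (Fin n) × EuclideanSpace ℂ (Fin n)), eW w = w.ofLp := fun w => rfl
  set M := (Λ.map (J : _ →ₗ[ℂ] _)).comap eW.toLinearMap with hM
  have key : (relAdjoint Λ).comap eW.toLinearMap = Mᗮ := by
    ext w
    constructor
    · intro hw
      have hw' : ∀ q ∈ Λ, (inner ℂ w.ofLp.1 q.2 : ℂ) = inner ℂ w.ofLp.2 q.1 := fun q hq => hw q hq
      rw [Submodule.mem_orthogonal]
      rintro u hu
      rw [Submodule.mem_comap] at hu
      obtain ⟨q, hq, hqu⟩ := hu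
      have h := hw' q hq
      have hu' : u.ofLp = (-q.2, q.1) := by
        have hqu' : J q = eW u := hqu
        rw [← heW u, ← hqu', hJ]
      rw [WithLp.prod_inner_apply, hu']
      have hc := congrArg (starRingEnd ℂ) h
      rw [inner_conj_symm, inner_conj_symm] at hc
      simp only [inner_neg_left]
      rw [neg_add_eq_zero]
      exact hc
    · intro hw
      have hw' : ∀ u ∈ M, (inner ℂ u w : ℂ) = 0 := (Submodule.mem_orthogonal M w).1 hw
      have goal : ∀ q ∈ Λ, (inner ℂ w.ofLp.1 q.2 : ℂ) = inner ℂ w.ofLp.2 q.1 := by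
        intro q hq
        set u := eW.symm (J q) with hu
        have huJ : u.ofLp = J q := (heW u).symm.trans (eW.apply_symm_apply _)
        have hu' : u.ofLp = (-q.2, q.1) := huJ.trans (hJ q)
        have humem : u ∈ M := by
          rw [hM, Submodule.mem_comap]
          show eW u ∈ Λ.map (J : _ →ₗ[ℂ] _)
          rw [heW u, huJ]
          exact Submodule.mem_map_of_mem hq
        have h := hw' u humem
        rw [WithLp.prod_inner_apply, hu'] at h
        simp only [inner_neg_left] at h
        rw [neg_add_eq_zero] at h
        have h2 : (inner ℂ q.2 w.ofLp.1 : ℂ) = inner ℂ q.1 w.ofLp.2 := h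
        have hc := congrArg (starRingEnd ℂ) h2
        rwa [inner_conj_symm, inner_conj_symm] at hc
      exact goal
  rw [hΛ] at key
  have hr1 : finrank ℂ (Λ.comap eW.toLinearMap) = finrank ℂ Λ := by
    rw [Submodule.comap_equiv_eq_map_symm]
    exact LinearEquiv.finrank_map_eq _ _
  have hrM : finrank ℂ M = finrank ℂ Λ := by
    rw [hM, Submodule.comap_equiv_eq_map_symm]
    rw [LinearEquiv.finrank_map_eq]
    exact LinearEquiv.finrank_map_eq _ _
  haveI : FiniteDimensional ℂ (WithLp 2 (EuclideanSpace ℂ (Fin n) × EuclideanSpace ℂ (Fin n))) := eW.symm.finiteDimensional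
  have horth : finrank ℂ M + finrank ℂ Mᗮ = finrank ℂ (WithLp 2 (EuclideanSpace ℂ (Fin n) × EuclideanSpace ℂ (Fin n))) :=
    Submodule.finrank_add_finrank_orthogonal M
  have hdim : finrank ℂ (WithLp 2 (EuclideanSpace ℂ (Fin n) × EuclideanSpace ℂ (Fin n))) = n + n := by
    rw [eW.finrank_eq, Module.finrank_prod, finrank_euclideanSpace_fin]
  rw [← key, hr1, hrM, hdim] at horth
  omega

theorem kernel_lemma {n : ℕ}
    (Λ : Submodule ℂ (EuclideanSpace ℂ (Fin n) × EuclideanSpace ℂ (Fin n)))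
    (hΛ : IsSelfAdjointRel Λ) (θ : Finset (Fin n))
    (hsep : ∀ v, ((0 : EuclideanSpace ℂ (Fin n)), v) ∈ Λ → (∀ j ∈ θ, v j = 0) → v = 0)
    (hsurj : ∀ x : EuclideanSpace ℂ (Fin n),
      ∃ v, ((0 : EuclideanSpace ℂ (Fin n)), v) ∈ Λ ∧ ∀ j ∈ θ, v j = x j)
    (p : EuclideanSpace ℂ (Fin n) × EuclideanSpace ℂ (Fin n)) (hp : p ∈ Λ)
    (h1 : ∀ j ∉ θ, p.1 j = 0) (h2 : ∀ j ∈ θ, p.2 j = 0) : p = 0 := by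
  have hadj : ∀ q ∈ Λ, (inner ℂ p.1 q.2 : ℂ) = inner ℂ p.2 q.1 := by
    rw [← hΛ] at hp; exact hp
  obtain ⟨v, hvN, hv⟩ := hsurj p.1
  have horto : (inner ℂ p.1 v : ℂ) = 0 := by
    have := hadj ((0 : EuclideanSpace ℂ (Fin n)), v) hvN
    simpa using this
  have hp1 : p.1 = 0 := by
    have hsum : (inner ℂ p.1 p.1 : ℂ) = 0 := by
      rw [← horto, PiLp.inner_apply, PiLp.inner_apply]
      refine Finset.sum_congr rfl fun j _ => ?_
      by_cases hj : j ∈ θ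
      · rw [hv j hj]
      · rw [h1 j hj]; simp
    exact inner_self_eq_zero.1 hsum
  have hp2N : ((0 : EuclideanSpace ℂ (Fin n)), p.2) ∈ Λ := by
    have hpe : ((0 : EuclideanSpace ℂ (Fin n)), p.2) = p := Prod.ext hp1.symm rfl
    rwa [hpe]
  have hp2 : p.2 = 0 := hsep p.2 hp2N h2
  exact Prod.ext hp1 hp2

/-- First-component map of the transformed relation, as a linear map on `Λ`. -/
def Tmap {n : ℕ} (θ : Finset (Fin n))
    (Λ : Submodule ℂ (EuclideanSpace ℂ (Fin n) × EuclideanSpace ℂ (Fin n))) :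
    Λ →ₗ[ℂ] EuclideanSpace ℂ (Fin n) where
  toFun p := WithLp.toLp 2 (fun j => if j ∈ θ then ((p : EuclideanSpace ℂ (Fin n) × EuclideanSpace ℂ (Fin n))).2 j else ((p : EuclideanSpace ℂ (Fin n) × EuclideanSpace ℂ (Fin n))).1 j)
  map_add' a b := by
    ext j
    by_cases h : j ∈ θ <;>
      simp [h, PiLp.add_apply, Submodule.coe_add]
  map_smul' c a := by
    ext j
    by_cases h : j ∈ θ <;>
      simp [h, PiLp.smul_apply, Submodule.coe_smul]

theorem Tmap_apply {n : ℕ} (θ : Finset (Fin n))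
    (Λ : Submodule ℂ (EuclideanSpace ℂ (Fin n) × EuclideanSpace ℂ (Fin n)))
    (p : Λ) (j : Fin n) :
    Tmap θ Λ p j = if j ∈ θ then ((p : EuclideanSpace ℂ (Fin n) × EuclideanSpace ℂ (Fin n))).2 j else ((p : EuclideanSpace ℂ (Fin n) × EuclideanSpace ℂ (Fin n))).1 j := rfl

end ArnoldAuxProof

/-- Arnold's lemma. For every self-adjoint linear relation `Λ` on `ℂⁿ`
there is a subset `θ ⊆ {1,…,n}` such that the transformed relation `Λ^θ` is the graph of a
linear operator: its projection onto the first component is injective and surjective. -/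
theorem exists_coordinate_subspace_graph (n : ℕ)
    (Λ : Submodule ℂ (EuclideanSpace ℂ (Fin n) × EuclideanSpace ℂ (Fin n)))
    (hΛ : IsSelfAdjointRel Λ) :
    ∃ θ : Finset (Fin n),
      (∀ r s : EuclideanSpace ℂ (Fin n) × EuclideanSpace ℂ (Fin n),
          r ∈ coordTransform θ Λ → s ∈ coordTransform θ Λ → r.1 = s.1 → r.2 = s.2) ∧
      (∀ x : EuclideanSpace ℂ (Fin n), ∃ y : EuclideanSpace ℂ (Fin n),
          (x, y) ∈ coordTransform θ Λ) := by
  classical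
  obtain ⟨θ, hsep, hsurj⟩ := ArnoldAuxProof.exists_good
    (Λ.comap (LinearMap.inr ℂ (EuclideanSpace ℂ (Fin n)) (EuclideanSpace ℂ (Fin n))))
  have hsep' : ∀ v, ((0 : EuclideanSpace ℂ (Fin n)), v) ∈ Λ → (∀ j ∈ θ, v j = 0) → v = 0 := by
    intro v hv
    exact hsep v (Submodule.mem_comap.2 (by simpa using hv))
  have hsurj' : ∀ x : EuclideanSpace ℂ (Fin n),
      ∃ v, ((0 : EuclideanSpace ℂ (Fin n)), v) ∈ Λ ∧ ∀ j ∈ θ, v j = x j := by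
    intro x
    obtain ⟨v, hvN, hv⟩ := hsurj x
    exact ⟨v, by simpa using Submodule.mem_comap.1 hvN, hv⟩
  refine ⟨θ, ?_, ?_⟩
  · rintro r s ⟨p, hp, hr1, hr2⟩ ⟨q, hq, hs1, hs2⟩ h1
    have hd : p - q ∈ Λ := sub_mem hp hq
    have hd1 : ∀ j, j ∉ θ → (p - q).1 j = 0 := by
      intro j hj
      have hrs := congrArg (fun z : EuclideanSpace ℂ (Fin n) => z j) h1
      simp only at hrs
      rw [hr1 j, hs1 j, if_neg hj, if_neg hj] at hrs
      simp [Prod.fst_sub, PiLp.sub_apply, hrs]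
    have hd2 : ∀ j ∈ θ, (p - q).2 j = 0 := by
      intro j hj
      have hrs := congrArg (fun z : EuclideanSpace ℂ (Fin n) => z j) h1
      simp only at hrs
      rw [hr1 j, hs1 j, if_pos hj, if_pos hj] at hrs
      simp [Prod.snd_sub, PiLp.sub_apply, hrs]
    have h0 : p - q = 0 := ArnoldAuxProof.kernel_lemma Λ hΛ θ hsep' hsurj' _ hd hd1 hd2
    have hpq : p = q := sub_eq_zero.1 h0
    ext j
    rw [hr2 j, hs2 j, hpq]
  · have hdim := ArnoldAuxProof.finrank_selfAdjointRel Λ hΛ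
    set T := ArnoldAuxProof.Tmap θ Λ with hT
    have hker : LinearMap.ker T = ⊥ := by
      rw [LinearMap.ker_eq_bot']
      intro p hp0
      have e1 : ∀ j, j ∉ θ →
          ((p : EuclideanSpace ℂ (Fin n) × EuclideanSpace ℂ (Fin n))).1 j = 0 := by
        intro j hj
        have hz := congrArg (fun z : EuclideanSpace ℂ (Fin n) => z j) hp0
        simp only at hz
        rw [hT, ArnoldAuxProof.Tmap_apply, if_neg hj] at hz
        simpa using hz
      have e2 : ∀ j ∈ θ,
          ((p : EuclideanSpace ℂ (Fin n) × EuclideanSpace ℂ (Fin n))).2 j = 0 := by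
        intro j hj
        have hz := congrArg (fun z : EuclideanSpace ℂ (Fin n) => z j) hp0
        simp only at hz
        rw [hT, ArnoldAuxProof.Tmap_apply, if_pos hj] at hz
        simpa using hz
      exact Subtype.ext (ArnoldAuxProof.kernel_lemma Λ hΛ θ hsep' hsurj' _ p.2 e1 e2)
    have hrange : LinearMap.range T = ⊤ := by
      have hft := LinearMap.finrank_range_add_finrank_ker T
      rw [hker, finrank_bot, add_zero, hdim] at hft
      exact Submodule.eq_top_of_finrank_eq (by rw [hft, finrank_euclideanSpace_fin])
    intro x
    obtain ⟨p, hpx⟩ := LinearMap.range_eq_top.1 hrange x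
    refine ⟨(WithLp.toLp 2 (fun j => if j ∈ θ then
        -(((p : EuclideanSpace ℂ (Fin n) × EuclideanSpace ℂ (Fin n))).1 j)
        else ((p : EuclideanSpace ℂ (Fin n) × EuclideanSpace ℂ (Fin n))).2 j) :
        EuclideanSpace ℂ (Fin n)),
      (p : EuclideanSpace ℂ (Fin n) × EuclideanSpace ℂ (Fin n)), p.2, ?_, fun j => rfl⟩
    intro j
    rw [← hpx]
    rfl
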